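/- Let G be a finite group of conjugate type (p, 1), i.e., [G : C(x)] = p for all non-central x ∈ G. Then every proper centralizer of G is non-abelian if and only if [G : Z(G)] > p^2, and G has a unique non-abelian centralizer (namely G itself) if and only if G/Z(G) ≅ C_p × C_p. -/

import Mathlib

/-- The set of element centralizers of `G`. -/
def cent (G : Type*) [Group G] : Set (Subgroup G) :=
  Set.range fun x : G => Subgroup.centralizer {x}

/-- The number of distinct element centralizers of `G`. -/
noncomputable def numCent (G : Type*) [Group G] : ℕ := (cent G).ncard

/-- The center of the centralizer `C(x)`, viewed as a subgroup of `G`. -/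
def centerCentralizer {G : Type*} [Group G] (x : G) : Subgroup G :=
  Subgroup.centralizer {x} ⊓
    Subgroup.centralizer ((Subgroup.centralizer {x} : Subgroup G) : Set G)

/-- `G` is an F-group: for non-central `x, y`, `C(x) ≤ C(y)` implies `C(x) = C(y)`. -/
def IsFGroup (G : Type*) [Group G] : Prop :=
  ∀ x y : G, x ∉ Subgroup.center G → y ∉ Subgroup.center G →
    Subgroup.centralizer {x} ≤ Subgroup.centralizer {y} →
    Subgroup.centralizer ({x} : Set G) = Subgroup.centralizer {y}

/-- The set of conjugates of a subgroup `H` of `G`. -/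
def conjugates {G : Type*} [Group G] (H : Subgroup G) : Set (Subgroup G) :=
  {K | ∃ g : G, K = Subgroup.map (MulAut.conj g).toMonoidHom H}

/-- The number of `z`-classes of `G`: elements are `z`-equivalent when their
centralizers are conjugate in `G`, so the number of `z`-classes is the number of
distinct conjugacy classes of element centralizers. -/
noncomputable def numZClasses (G : Type*) [Group G] : ℕ :=
  (Set.range fun x : G => conjugates (Subgroup.centralizer {x})).ncard

section StmtNineteenHelpers

set_option linter.unusedSectionVars false

private lemma stmt19.vsEquiv {p : ℕ} (hp : p.Prime) (V : Type*) [AddCommGroup V]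
    [Module (ZMod p) V] [Finite V] (hcard : Nat.card V = p ^ 2) :
    Nonempty (V ≃+ (ZMod p × ZMod p)) := by
  haveI := Fact.mk hp
  haveI : NeZero p := ⟨hp.ne_zero⟩
  haveI : Module.Finite (ZMod p) V := Module.finite_iff_finite.mpr inferInstance
  haveI : Fintype V := Fintype.ofFinite V
  have hcard1 : Fintype.card V = p ^ Module.finrank (ZMod p) V := by
    have := Module.card_eq_pow_finrank (K := ZMod p) (V := V)
    rwa [ZMod.card] at this
  have hcard2 : Fintype.card V = p ^ 2 := by rw [← Nat.card_eq_fintype_card]; exact hcard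
  have hfr : Module.finrank (ZMod p) V = 2 := by
    have h3 : p ^ Module.finrank (ZMod p) V = p ^ 2 := by rw [← hcard1, hcard2]
    exact Nat.pow_right_injective hp.two_le h3
  have hfr2 : Module.finrank (ZMod p) (ZMod p × ZMod p) = 2 := by
    rw [Module.finrank_prod, Module.finrank_self]
  have hcond : Module.finrank (ZMod p) V = Module.finrank (ZMod p) (ZMod p × ZMod p) := by
    rw [hfr, hfr2]
  obtain ⟨e⟩ := FiniteDimensional.nonempty_linearEquiv_of_finrank_eq hcond
  exact ⟨e.toAddEquiv⟩

variable {G : Type*} [Group G] [Finite G] {p : ℕ}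

private lemma stmt19.hrel (h : ∀ x : G, x ∉ Subgroup.center G → (Subgroup.centralizer {x}).index = p)
    {y : G} (hy : y ∉ Subgroup.center G) :
    (Subgroup.center G).relIndex (Subgroup.centralizer {y}) * p = (Subgroup.center G).index := by
  rw [← h y hy]
  exact Subgroup.relIndex_mul_index (Subgroup.center_le_centralizer {y})

/-- Step 1: p divides the relative index of the center in any non-central centralizer. -/
private lemma stmt19.step1 (hp : p.Prime)
    (h : ∀ x : G, x ∉ Subgroup.center G → (Subgroup.centralizer {x}).index = p)
    {x : G} (hx : x ∉ Subgroup.center G) :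
    p ∣ (Subgroup.center G).relIndex (Subgroup.centralizer {x}) := by
  haveI := Fact.mk hp
  set Z := Subgroup.center G with hZdef
  set m := Z.relIndex (Subgroup.centralizer {x}) with hmdef
  have hn : m * p = Z.index := stmt19.hrel h hx
  have hn0 : Z.index ≠ 0 := Subgroup.index_ne_zero_of_finite
  have hm0 : m ≠ 0 := by
    intro h0; rw [h0, zero_mul] at hn; exact hn0 hn.symm
  have hpdvd : p ∣ Nat.card (G ⧸ Z) := by
    rw [← Subgroup.index_eq_card, ← hn]; exact dvd_mul_left p m
  obtain ⟨g, hg⟩ := exists_prime_orderOf_dvd_card' p hpdvd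
  set P : Subgroup G := Subgroup.comap (QuotientGroup.mk' Z) (Subgroup.zpowers g) with hPdef
  have hZP : Z ≤ P := by
    intro z hz
    have h1 : (QuotientGroup.mk' Z) z = 1 := (QuotientGroup.eq_one_iff z).mpr hz
    simp only [hPdef, Subgroup.mem_comap, h1, Subgroup.one_mem]
  have hcardzp : Nat.card (Subgroup.zpowers g) = p := by rw [Nat.card_zpowers, hg]
  have h2 : (Subgroup.zpowers g).index * p = Z.index := by
    rw [← hcardzp, Subgroup.index_mul_card, ← Subgroup.index_eq_card]
  have hPindex : P.index = m := by
    have h1 : P.index = (Subgroup.zpowers g).index :=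
      Subgroup.index_comap_of_surjective _ (QuotientGroup.mk'_surjective Z)
    have h3 : (Subgroup.zpowers g).index = m :=
      Nat.eq_of_mul_eq_mul_right hp.pos (by rw [h2, ← hn])
    rw [h1, h3]
  have hrelZP : Z.relIndex P = p := by
    have h4 := Subgroup.relIndex_mul_index hZP
    rw [hPindex, ← hn] at h4
    exact Nat.eq_of_mul_eq_mul_right (Nat.pos_of_ne_zero hm0) (by rw [h4, mul_comm])
  have hPnotle : ¬ P ≤ Z := by
    intro hle
    have h5 : Z.relIndex P = 1 := Subgroup.relIndex_eq_one.mpr hle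
    rw [hrelZP] at h5; exact hp.one_lt.ne' h5
  obtain ⟨u, huP, huZ⟩ := SetLike.not_le_iff_exists.mp hPnotle
  haveI : IsCyclic (Subgroup.zpowers g) := isCyclic_of_prime_card hcardzp
  have hcomm : ∀ a b : P, a * b = b * a := by
    apply commutative_of_cyclic_center_quotient
      (((QuotientGroup.mk' Z).comp P.subtype).codRestrict (Subgroup.zpowers g)
        (fun a => Subgroup.mem_comap.mp a.2))
    intro a ha
    rw [MonoidHom.mem_ker] at ha
    have ha1 : (QuotientGroup.mk' Z) (a : G) = 1 := congrArg Subtype.val ha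
    have haZ : (a : G) ∈ Z := (QuotientGroup.eq_one_iff _).mp ha1
    exact Subgroup.mem_center_iff.mpr fun b =>
      Subtype.ext (Subgroup.mem_center_iff.mp haZ (b : G))
  have hPle : P ≤ Subgroup.centralizer {u} := by
    intro v hv
    exact Subgroup.mem_centralizer_singleton_iff.mpr
      (congrArg Subtype.val (hcomm ⟨v, hv⟩ ⟨u, huP⟩))
  have hchain := Subgroup.relIndex_mul_relIndex Z P (Subgroup.centralizer {u}) hZP hPle
  have hmu : Z.relIndex (Subgroup.centralizer {u}) = m :=
    Nat.eq_of_mul_eq_mul_right hp.pos (by rw [stmt19.hrel h huZ, hn])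
  rw [hrelZP, hmu] at hchain
  exact Dvd.intro _ hchain

/-- Step 2: if the center has index p², every non-central centralizer is abelian. -/
private lemma stmt19.step2 (hp : p.Prime)
    (h : ∀ x : G, x ∉ Subgroup.center G → (Subgroup.centralizer {x}).index = p)
    (hn : (Subgroup.center G).index = p ^ 2)
    {x : G} (hx : x ∉ Subgroup.center G) :
    ∀ a ∈ Subgroup.centralizer ({x} : Set G), ∀ b ∈ Subgroup.centralizer ({x} : Set G),
      a * b = b * a := by
  haveI := Fact.mk hp
  set Z := Subgroup.center G with hZdef
  set C := Subgroup.centralizer ({x} : Set G) with hCdef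
  have hm : Z.relIndex C = p := by
    have h1 : Z.relIndex C * p = p * p := by rw [stmt19.hrel h hx, hn, sq]
    exact Nat.eq_of_mul_eq_mul_right hp.pos h1
  set f0 : C →* G ⧸ Z := (QuotientGroup.mk' Z).comp C.subtype with hf0
  have hker : f0.ker = Z.subgroupOf C := by
    ext a
    simp only [hf0, MonoidHom.mem_ker, MonoidHom.comp_apply, Subgroup.coe_subtype,
      QuotientGroup.mk'_apply, QuotientGroup.eq_one_iff, Subgroup.mem_subgroupOf]
  have hcardrange : Nat.card f0.range = p := by
    have h1 : Nat.card (C ⧸ f0.ker) = Nat.card f0.range :=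
      Nat.card_congr (QuotientGroup.quotientKerEquivRange f0).toEquiv
    rw [← h1, ← Subgroup.index_eq_card, hker]
    exact hm
  haveI : IsCyclic f0.range := isCyclic_of_prime_card hcardrange
  have hcomm : ∀ a b : C, a * b = b * a := by
    apply commutative_of_cyclic_center_quotient f0.rangeRestrict
    rw [MonoidHom.ker_rangeRestrict, hker]
    intro a ha
    rw [Subgroup.mem_subgroupOf] at ha
    exact Subgroup.mem_center_iff.mpr fun b =>
      Subtype.ext (Subgroup.mem_center_iff.mp ha (b : G))
  intro a ha b hb
  exact congrArg Subtype.val (hcomm ⟨a, ha⟩ ⟨b, hb⟩)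

/-- Step 3: if some non-central centralizer is abelian, then the relative index is ≤ p. -/
private lemma stmt19.step3 (hp : p.Prime)
    (h : ∀ x : G, x ∉ Subgroup.center G → (Subgroup.centralizer {x}).index = p)
    {x : G} (hx : x ∉ Subgroup.center G)
    (hab : ∀ a ∈ Subgroup.centralizer ({x} : Set G), ∀ b ∈ Subgroup.centralizer ({x} : Set G),
      a * b = b * a) :
    (Subgroup.center G).relIndex (Subgroup.centralizer {x}) ≤ p := by
  set Z := Subgroup.center G with hZdef
  set C := Subgroup.centralizer ({x} : Set G) with hCdef
  have hCtop : C ≠ ⊤ := by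
    intro ht
    have := h x hx
    rw [hCdef] at ht
    rw [ht, Subgroup.index_top] at this
    exact hp.one_lt.ne' this.symm
  obtain ⟨g, hg⟩ : ∃ g : G, g ∉ C := by
    by_contra hc
    push_neg at hc
    exact hCtop ((Subgroup.eq_top_iff' C).mpr hc)
  have hgZ : g ∉ Z := fun hz => hg (Subgroup.center_le_centralizer {x} hz)
  have hinf : C ⊓ Subgroup.centralizer {g} = Z := by
    apply le_antisymm
    · intro y hy
      rw [Subgroup.mem_inf] at hy
      obtain ⟨hy1, hy2⟩ := hy
      by_contra hyZ
      have hle : C ≤ Subgroup.centralizer {y} := fun c hc =>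
        Subgroup.mem_centralizer_singleton_iff.mpr (hab c hc y hy1)
      have hrle : C.relIndex (Subgroup.centralizer {y}) * (Subgroup.centralizer {y}).index
          = C.index := Subgroup.relIndex_mul_index hle
      rw [h y hyZ, h x hx] at hrle
      have h1 : C.relIndex (Subgroup.centralizer {y}) = 1 :=
        Nat.eq_of_mul_eq_mul_right hp.pos (by rw [hrle, one_mul])
      have hyle : Subgroup.centralizer {y} ≤ C := Subgroup.relIndex_eq_one.mp h1
      have hgy : g ∈ Subgroup.centralizer ({y} : Set G) :=
        Subgroup.mem_centralizer_singleton_iff.mpr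
          (Subgroup.mem_centralizer_singleton_iff.mp hy2).symm
      exact hg (hyle hgy)
    · exact le_inf (Subgroup.center_le_centralizer {x}) (Subgroup.center_le_centralizer {g})
  have hle2 : Z.index ≤ p * p := by
    rw [← hinf]
    calc (C ⊓ Subgroup.centralizer {g}).index ≤ C.index * (Subgroup.centralizer {g}).index :=
          Subgroup.index_inf_le
      _ = p * p := by rw [h x hx, h g hgZ]
  have h2 : Z.relIndex C * p ≤ p * p := by rw [stmt19.hrel h hx]; exact hle2
  exact Nat.le_of_mul_le_mul_right h2 hp.pos

/-- Classification: if the center has index p², then G/Z(G) ≅ Cp × Cp. -/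
private lemma stmt19.classify (hp : p.Prime) (hna : Subgroup.center G ≠ ⊤)
    (hn : (Subgroup.center G).index = p ^ 2) :
    Nonempty ((G ⧸ Subgroup.center G) ≃* Multiplicative (ZMod p × ZMod p)) := by
  haveI := Fact.mk hp
  haveI : NeZero p := ⟨hp.ne_zero⟩
  set Q := G ⧸ Subgroup.center G with hQdef
  have hQ : Nat.card Q = p ^ 2 := by rw [← Subgroup.index_eq_card]; exact hn
  have notcyc : ¬ IsCyclic Q := by
    intro hc
    apply hna
    have hcomm := commutative_of_cyclic_center_quotient (QuotientGroup.mk' (Subgroup.center G))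
      (le_of_eq (QuotientGroup.ker_mk' _))
    rw [Subgroup.eq_top_iff']
    exact fun y => Subgroup.mem_center_iff.mpr fun g => hcomm g y
  letI : CommGroup Q := IsPGroup.commGroupOfCardEqPrimeSq hQ
  have hexp : Monoid.exponent Q = p := (not_isCyclic_iff_exponent_eq_prime hp hQ).mp notcyc
  have hsmul : ∀ q : Additive Q, p • q = 0 := by
    intro q
    have h1 : (p • q).toMul = q.toMul ^ p := toMul_nsmul p q
    have h2 : q.toMul ^ p = 1 := hexp ▸ Monoid.pow_exponent_eq_one q.toMul
    exact Additive.toMul.injective (h1.trans h2)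
  letI : Module (ZMod p) (Additive Q) := AddCommMonoid.zmodModule hsmul
  obtain ⟨e⟩ := stmt19.vsEquiv hp (Additive Q) hQ
  exact ⟨(MulEquiv.multiplicativeAdditive Q).symm.trans (AddEquiv.toMultiplicative e)⟩

end StmtNineteenHelpers

theorem stmt19 (G : Type*) [Group G] [Finite G] (p : ℕ) (hp : p.Prime)
    (hna : Subgroup.center G ≠ ⊤)
    (h : ∀ x : G, x ∉ Subgroup.center G → (Subgroup.centralizer {x}).index = p) :
    ((∀ x : G, x ∉ Subgroup.center G →
        ¬ ∀ a ∈ Subgroup.centralizer ({x} : Set G),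
            ∀ b ∈ Subgroup.centralizer ({x} : Set G), a * b = b * a) ↔
      p ^ 2 < (Subgroup.center G).index) ∧
    (({H ∈ cent G | ¬ ∀ a ∈ H, ∀ b ∈ H, a * b = b * a} :
        Set (Subgroup G)).ncard = 1 ↔
      Nonempty ((G ⧸ Subgroup.center G) ≃* Multiplicative (ZMod p × ZMod p))) := by
  classical
  haveI := Fact.mk hp
  obtain ⟨x₀, hx₀⟩ : ∃ x : G, x ∉ Subgroup.center G := by
    by_contra hc
    push_neg at hc
    exact hna ((Subgroup.eq_top_iff' _).mpr hc)
  have hn0 : (Subgroup.center G).index ≠ 0 := Subgroup.index_ne_zero_of_finite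
  -- some notation
  have hCtopne : ∀ x : G, x ∉ Subgroup.center G → Subgroup.centralizer ({x} : Set G) ≠ ⊤ := by
    intro x hx ht
    have := h x hx
    rw [ht, Subgroup.index_top] at this
    exact hp.one_lt.ne' this.symm
  have htopcent : (⊤ : Subgroup G) ∈ cent G :=
    ⟨1, Subgroup.centralizer_eq_top_iff_subset.mpr
      (Set.singleton_subset_iff.mpr (Subgroup.one_mem _))⟩
  have htopna : ¬ ∀ a ∈ (⊤ : Subgroup G), ∀ b ∈ (⊤ : Subgroup G), a * b = b * a := by
    intro hall
    exact hna ((Subgroup.eq_top_iff' _).mpr fun y => Subgroup.mem_center_iff.mpr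
      fun g => hall g trivial y trivial)
  constructor
  · -- part 1
    constructor
    · intro hall
      have hm := stmt19.hrel h hx₀
      have hdvd := stmt19.step1 hp h hx₀
      set m := (Subgroup.center G).relIndex (Subgroup.centralizer {x₀}) with hmdef
      have hm0 : m ≠ 0 := by
        intro h0; rw [h0, zero_mul] at hm; exact hn0 hm.symm
      have hmnep : m ≠ p := by
        intro hmp
        have hnp2 : (Subgroup.center G).index = p ^ 2 := by rw [← hm, hmp, sq]
        exact hall x₀ hx₀ (stmt19.step2 hp h hnp2 hx₀)
      have hplt : p < m :=
        lt_of_le_of_ne (Nat.le_of_dvd (Nat.pos_of_ne_zero hm0) hdvd) (Ne.symm hmnep)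
      calc p ^ 2 = p * p := sq p
        _ < m * p := mul_lt_mul_of_pos_right hplt hp.pos
        _ = (Subgroup.center G).index := hm
    · intro hlt x hx hab
      have h3 := stmt19.step3 hp h hx hab
      have hm := stmt19.hrel h hx
      have hle : (Subgroup.center G).index ≤ p * p := by
        rw [← hm]; exact Nat.mul_le_mul_right p h3
      rw [← sq] at hle
      exact absurd hlt (not_lt.mpr hle)
  · -- part 2
    constructor
    · intro hone
      have hallab : ∀ x : G, x ∉ Subgroup.center G →
          ∀ a ∈ Subgroup.centralizer ({x} : Set G), ∀ b ∈ Subgroup.centralizer ({x} : Set G),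
            a * b = b * a := by
        by_contra hc
        push_neg at hc
        obtain ⟨x, hx, a, ha, b, hb, hne⟩ := hc
        have hnab : ¬ ∀ a ∈ Subgroup.centralizer ({x} : Set G),
            ∀ b ∈ Subgroup.centralizer ({x} : Set G), a * b = b * a :=
          fun hall => hne (hall a ha b hb)
        have hsub : {(⊤ : Subgroup G), Subgroup.centralizer ({x} : Set G)} ⊆
            {H ∈ cent G | ¬ ∀ a ∈ H, ∀ b ∈ H, a * b = b * a} := by
          rintro K hK
          rcases hK with rfl | hK
          · exact ⟨htopcent, htopna⟩
          · rw [Set.mem_singleton_iff] at hK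
            subst hK
            exact ⟨⟨x, rfl⟩, hnab⟩
        have h2 : 2 ≤ ({H ∈ cent G | ¬ ∀ a ∈ H, ∀ b ∈ H, a * b = b * a} :
            Set (Subgroup G)).ncard := by
          have hle := Set.ncard_le_ncard hsub (Set.toFinite _)
          rwa [Set.ncard_pair (Ne.symm (hCtopne x hx))] at hle
        omega
      have h3 := stmt19.step3 hp h hx₀ (hallab x₀ hx₀)
      have hdvd := stmt19.step1 hp h hx₀
      have hm := stmt19.hrel h hx₀
      have hm0 : (Subgroup.center G).relIndex (Subgroup.centralizer {x₀}) ≠ 0 := by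
        intro h0; rw [h0, zero_mul] at hm; exact hn0 hm.symm
      have hmp : (Subgroup.center G).relIndex (Subgroup.centralizer {x₀}) = p :=
        le_antisymm h3 (Nat.le_of_dvd (Nat.pos_of_ne_zero hm0) hdvd)
      have hnp2 : (Subgroup.center G).index = p ^ 2 := by rw [← hm, hmp, sq]
      exact stmt19.classify hp hna hnp2
    · rintro ⟨e⟩
      have hnp2 : (Subgroup.center G).index = p ^ 2 := by
        rw [Subgroup.index_eq_card]
        have h1 : Nat.card (G ⧸ Subgroup.center G)
            = Nat.card (Multiplicative (ZMod p × ZMod p)) := Nat.card_congr e.toEquiv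
        have h2 : Nat.card (Multiplicative (ZMod p × ZMod p)) = Nat.card (ZMod p × ZMod p) :=
          Nat.card_congr Multiplicative.toAdd
        rw [h1, h2, Nat.card_prod, Nat.card_zmod, sq]
      have hSeq : ({H ∈ cent G | ¬ ∀ a ∈ H, ∀ b ∈ H, a * b = b * a} : Set (Subgroup G))
          = {(⊤ : Subgroup G)} := by
        ext K
        simp only [Set.mem_setOf_eq, Set.mem_singleton_iff]
        constructor
        · rintro ⟨⟨x, rfl⟩, hnab⟩
          by_cases hx : x ∈ Subgroup.center G
          · exact Subgroup.centralizer_eq_top_iff_subset.mpr (Set.singleton_subset_iff.mpr hx)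
          · exact absurd (stmt19.step2 hp h hnp2 hx) hnab
        · rintro rfl
          exact ⟨htopcent, htopna⟩
      rw [hSeq, Set.ncard_singleton]
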